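/- Let d be a positive integer, let M be a real d×d symmetric positive definite matrix, let D be a real d×d symmetric positive semidefinite matrix, and let F be an invertible real d×d matrix. Then ‖F⁻¹ D F⁻ᵀ‖₂ ≤ ‖F⁻¹ M⁻¹ F⁻ᵀ‖₂ · ‖M D‖₂, where ‖·‖₂ denotes the spectral norm. -/

import Mathlib

open Matrix

/-- The spectral norm of a real `d × d` matrix: the operator norm of the
induced linear map on Euclidean space. -/
noncomputable def specNorm {d : ℕ} (A : Matrix (Fin d) (Fin d) ℝ) : ℝ :=
  ‖(Matrix.toEuclideanCLM (𝕜 := ℝ) (n := Fin d) A :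
      EuclideanSpace ℝ (Fin d) →L[ℝ] EuclideanSpace ℝ (Fin d))‖

open scoped Matrix.Norms.L2Operator in
lemma l2norm_diagonal_le {d : ℕ} (v : Fin d → ℝ) (c : ℝ) (hc : 0 ≤ c)
    (h : ∀ i, |v i| ≤ c) :
    ‖(Matrix.diagonal v : Matrix (Fin d) (Fin d) ℝ)‖ ≤ c := by
  rw [Matrix.l2_opNorm_def]
  refine ContinuousLinearMap.opNorm_le_bound _ hc fun x => ?_
  have hx : ((Matrix.toEuclideanLin (𝕜 := ℝ) (m := Fin d) (n := Fin d)).trans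
      LinearMap.toContinuousLinearMap (Matrix.diagonal v)) x
      = Matrix.toEuclideanLin (𝕜 := ℝ) (Matrix.diagonal v) x := rfl
  rw [hx, Matrix.toEuclideanLin_apply]
  rw [EuclideanSpace.norm_eq, EuclideanSpace.norm_eq]
  have h1 : ∑ i, ‖(WithLp.equiv 2 (Fin d → ℝ)).symm
        (Matrix.diagonal v *ᵥ (WithLp.equiv 2 (Fin d → ℝ)) x) i‖ ^ 2
      ≤ c ^ 2 * ∑ i, ‖x i‖ ^ 2 := by
    rw [Finset.mul_sum]
    refine Finset.sum_le_sum fun i _ => ?_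
    have : (WithLp.equiv 2 (Fin d → ℝ)).symm
        (Matrix.diagonal v *ᵥ (WithLp.equiv 2 (Fin d → ℝ)) x) i = v i * x i := by
      simp [Matrix.mulVec_diagonal]
    rw [this]
    have hv : (v i) ^ 2 ≤ c ^ 2 := by
      have := sq_abs (v i) ▸ pow_le_pow_left₀ (abs_nonneg _) (h i) 2
      simpa using this
    calc ‖v i * x i‖ ^ 2 = (v i) ^ 2 * ‖x i‖ ^ 2 := by
          rw [norm_mul, mul_pow]; congr 1; rw [Real.norm_eq_abs, sq_abs]
      _ ≤ c ^ 2 * ‖x i‖ ^ 2 := by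
          exact mul_le_mul_of_nonneg_right hv (by positivity)
  calc Real.sqrt (∑ i, ‖(WithLp.equiv 2 (Fin d → ℝ)).symm
        (Matrix.diagonal v *ᵥ (WithLp.equiv 2 (Fin d → ℝ)) x) i‖ ^ 2)
      ≤ Real.sqrt (c ^ 2 * ∑ i, ‖x i‖ ^ 2) := Real.sqrt_le_sqrt h1
    _ = c * Real.sqrt (∑ i, ‖x i‖ ^ 2) := by
        rw [Real.sqrt_mul (by positivity), Real.sqrt_sq hc]

open scoped Matrix.Norms.L2Operator in
/-- A real symmetric matrix's operator norm is bounded by any bound on its eigenvalues. -/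
lemma l2norm_hermitian_le {d : ℕ} (hd : 0 < d) {A : Matrix (Fin d) (Fin d) ℝ}
    (hA : A.IsHermitian) (c : ℝ) (hc : 0 ≤ c)
    (h : ∀ i, |hA.eigenvalues i| ≤ c) : ‖A‖ ≤ c := by
  haveI : Nonempty (Fin d) := ⟨⟨0, hd⟩⟩
  have hU : ‖((hA.eigenvectorUnitary : Matrix (Fin d) (Fin d) ℝ))‖ = 1 :=
    CStarRing.norm_coe_unitary hA.eigenvectorUnitary
  have hUs : ‖(star (hA.eigenvectorUnitary : Matrix (Fin d) (Fin d) ℝ))‖ = 1 := by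
    rw [Matrix.star_eq_conjTranspose, Matrix.l2_opNorm_conjTranspose, hU]
  have hdiag : ‖Matrix.diagonal (RCLike.ofReal ∘ hA.eigenvalues : Fin d → ℝ)‖ ≤ c := by
    refine l2norm_diagonal_le _ c hc fun i => ?_
    simpa using h i
  calc ‖A‖ = ‖(hA.eigenvectorUnitary : Matrix (Fin d) (Fin d) ℝ) *
        Matrix.diagonal (RCLike.ofReal ∘ hA.eigenvalues) *
        (star (hA.eigenvectorUnitary : Matrix (Fin d) (Fin d) ℝ))‖ := by
        conv_lhs => rw [hA.spectral_theorem, Unitary.conjStarAlgAut_apply]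
    _ ≤ ‖(hA.eigenvectorUnitary : Matrix (Fin d) (Fin d) ℝ) *
        Matrix.diagonal (RCLike.ofReal ∘ hA.eigenvalues)‖ *
        ‖(star (hA.eigenvectorUnitary : Matrix (Fin d) (Fin d) ℝ))‖ :=
        Matrix.l2_opNorm_mul _ _
    _ ≤ (‖(hA.eigenvectorUnitary : Matrix (Fin d) (Fin d) ℝ)‖ *
        ‖Matrix.diagonal (RCLike.ofReal ∘ hA.eigenvalues : Fin d → ℝ)‖) *
        ‖(star (hA.eigenvectorUnitary : Matrix (Fin d) (Fin d) ℝ))‖ :=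
        mul_le_mul_of_nonneg_right (Matrix.l2_opNorm_mul _ _) (norm_nonneg _)
    _ ≤ c := by rw [hU, hUs, one_mul, mul_one]; exact hdiag

open scoped Matrix.Norms.L2Operator MatrixOrder in
lemma stmt_6_aux (d : ℕ) (hd : 0 < d)
    (M D F : Matrix (Fin d) (Fin d) ℝ)
    (hM : M.PosDef) (hD : D.PosSemidef) (hF : IsUnit F) :
    ‖F⁻¹ * D * (Fᵀ)⁻¹‖ ≤ ‖F⁻¹ * M⁻¹ * (Fᵀ)⁻¹‖ * ‖M * D‖ := by
  haveI : Nonempty (Fin d) := ⟨⟨0, hd⟩⟩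
  classical
  have hct : ∀ A : Matrix (Fin d) (Fin d) ℝ, Aᴴ = Aᵀ := fun A =>
    Matrix.conjTranspose_eq_transpose_of_trivial A
  -- determinant/unit facts
  have hMdet : IsUnit M.det := hM.det_pos.ne'.isUnit
  have hFdet : IsUnit F.det := (Matrix.isUnit_iff_isUnit_det F).mp hF
  have hFTdet : IsUnit (Fᵀ).det := by rwa [Matrix.det_transpose]
  have hFT : IsUnit (Fᵀ) := (Matrix.isUnit_iff_isUnit_det _).mpr hFTdet
  -- `X` is positive semidefinite
  have hXps : (F⁻¹ * M⁻¹ * (Fᵀ)⁻¹).PosSemidef := by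
    have := hM.inv.posSemidef.mul_mul_conjTranspose_same F⁻¹
    rwa [hct, Matrix.transpose_nonsing_inv] at this
  have hXdet : IsUnit (F⁻¹ * M⁻¹ * (Fᵀ)⁻¹).det := by
    have h1 : F.det ≠ 0 := by simpa [isUnit_iff_ne_zero] using hFdet
    have h2 : M.det ≠ 0 := hM.det_pos.ne'
    rw [Matrix.det_mul, Matrix.det_mul, Matrix.det_nonsing_inv, Matrix.det_nonsing_inv,
      Matrix.det_nonsing_inv, Matrix.det_transpose]
    simp [isUnit_iff_ne_zero, Ring.inverse_eq_inv', h1, h2]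
  -- the square root `R` of `X`
  set R : Matrix (Fin d) (Fin d) ℝ := CFC.sqrt (F⁻¹ * M⁻¹ * (Fᵀ)⁻¹) with hRdef
  have hRps : R.PosSemidef := Matrix.nonneg_iff_posSemidef.mp (CFC.sqrt_nonneg _)
  have hRH : R.IsHermitian := hRps.1
  have hRR : R * R = F⁻¹ * M⁻¹ * (Fᵀ)⁻¹ := CFC.sqrt_mul_sqrt_self _ hXps.nonneg
  have hRdet : IsUnit R.det := by
    have : IsUnit (R.det * R.det) := by
      rw [← Matrix.det_mul, hRR]; exact hXdet
    exact isUnit_of_mul_isUnit_left this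
  -- cancellation facts
  have h2 : R⁻¹ * R = 1 := Matrix.nonsing_inv_mul R hRdet
  have h1 : R * R⁻¹ = 1 := Matrix.mul_nonsing_inv R hRdet
  have hM1 : M⁻¹ * M = 1 := Matrix.nonsing_inv_mul M hMdet
  have hFT1 : (Fᵀ)⁻¹ * Fᵀ = 1 := Matrix.nonsing_inv_mul (Fᵀ) hFTdet
  -- the matrix `S`
  set S : Matrix (Fin d) (Fin d) ℝ := R⁻¹ * (F⁻¹ * D * (Fᵀ)⁻¹) * R⁻¹ with hSdef
  have hRinvH : (R⁻¹)ᴴ = R⁻¹ := by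
    rw [Matrix.conjTranspose_nonsing_inv, hRH.eq]
  have hSps : S.PosSemidef := by
    have : ((R⁻¹ * F⁻¹) * D * (R⁻¹ * F⁻¹)ᴴ).PosSemidef :=
      hD.mul_mul_conjTranspose_same (R⁻¹ * F⁻¹)
    have hQ : (R⁻¹ * F⁻¹)ᴴ = (Fᵀ)⁻¹ * R⁻¹ := by
      rw [Matrix.conjTranspose_mul, hRinvH, Matrix.conjTranspose_nonsing_inv, hct]
    rw [hQ] at this
    rw [hSdef]
    convert this using 1
    simp only [mul_assoc]
  have hSH : S.IsHermitian := hSps.1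
  -- the key similarity identity
  have hkey : R⁻¹ * F⁻¹ = R * Fᵀ * M := by
    have e1 : R * Fᵀ * M = (R⁻¹ * (R * R)) * Fᵀ * M := by
      rw [← mul_assoc R⁻¹ R R, h2, one_mul]
    rw [e1, hRR]
    simp only [mul_assoc]
    rw [← mul_assoc (Fᵀ)⁻¹ Fᵀ M, hFT1, one_mul, hM1, mul_one]
  have hG : IsUnit (R * Fᵀ) := (Matrix.isUnit_iff_isUnit_det _).mpr (by
    rw [Matrix.det_mul]; exact hRdet.mul hFTdet)
  have hSG : S = (R * Fᵀ) * (M * D) * (R * Fᵀ)⁻¹ := by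
    rw [Matrix.mul_inv_rev, hSdef]
    simp only [← mul_assoc]
    rw [hkey]
  -- spectrum of `S` equals the spectrum of `M * D`
  have hspec : spectrum ℝ S = spectrum ℝ (M * D) := by
    rw [hSG, ← hG.unit_spec, ← Matrix.coe_units_inv hG.unit]
    exact spectrum.units_conjugate
  -- the norm of `S` is bounded by the norm of `M * D`
  haveI : CompleteSpace (Matrix (Fin d) (Fin d) ℝ) := FiniteDimensional.complete ℝ _
  have hSnorm : ‖S‖ ≤ ‖M * D‖ := by
    refine l2norm_hermitian_le hd hSH _ (norm_nonneg _) fun i => ?_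
    have hmem : hSH.eigenvalues i ∈ spectrum ℝ (M * D) :=
      hspec ▸ hSH.eigenvalues_mem_spectrum_real i
    simpa [Real.norm_eq_abs] using spectrum.norm_le_norm_of_mem hmem
  -- assembling the estimate
  have hnormRR : ‖R‖ * ‖R‖ = ‖F⁻¹ * M⁻¹ * (Fᵀ)⁻¹‖ := by
    rw [← Matrix.l2_opNorm_conjTranspose_mul_self R, hRH.eq, hRR]
  have hY : F⁻¹ * D * (Fᵀ)⁻¹ = R * S * R := by
    rw [hSdef]
    simp only [← mul_assoc]
    rw [h1, one_mul]
    simp only [mul_assoc]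
    rw [h2, mul_one]
  calc ‖F⁻¹ * D * (Fᵀ)⁻¹‖ = ‖R * S * R‖ := by rw [hY]
    _ ≤ ‖R * S‖ * ‖R‖ := Matrix.l2_opNorm_mul _ _
    _ ≤ (‖R‖ * ‖S‖) * ‖R‖ :=
        mul_le_mul_of_nonneg_right (Matrix.l2_opNorm_mul _ _) (norm_nonneg _)
    _ = (‖R‖ * ‖R‖) * ‖S‖ := by ring
    _ = ‖F⁻¹ * M⁻¹ * (Fᵀ)⁻¹‖ * ‖S‖ := by rw [hnormRR]
    _ ≤ ‖F⁻¹ * M⁻¹ * (Fᵀ)⁻¹‖ * ‖M * D‖ :=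
        mul_le_mul_of_nonneg_left hSnorm (norm_nonneg _)

theorem stmt_6 (d : ℕ) (hd : 0 < d)
    (M D F : Matrix (Fin d) (Fin d) ℝ)
    (hM : M.PosDef) (hD : D.PosSemidef) (hF : IsUnit F) :
    specNorm (F⁻¹ * D * (Fᵀ)⁻¹) ≤
      specNorm (F⁻¹ * M⁻¹ * (Fᵀ)⁻¹) * specNorm (M * D) := by
  exact stmt_6_aux d hd M D F hM hD hF
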